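/- Let A_N f(x,y) = N Σ_{γ∈Γ} r(x,y,γ)(f(x + γ_x/N, y + γ_y) − f(x,y)) on E = [0,∞)^l × F with F finite and Γ finite, r continuous. For f ∈ C¹_b([0,∞)^l) and h ∈ C([0,∞)^l × F), set f_N(x,y) = f(x) + N^{−1} h(x,y) and H_N g = (1/N) e^{−Ng} A_N e^{Ng}. Then for every (x,y), lim_{N→∞} H_N f_N(x,y) = Σ_{γ∈Γ} r(x,y,γ) ( e^{⟨∇f(x), γ_x⟩ + h(x, y+γ_y) − h(x,y)} − 1 ). -/

import Mathlib

open Filter Topology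

/-- Convergence of the nonlinear generators `H_N f_N` for a two-scale chemical
reaction network: with `f_N(x,y) = f(x) + h(x,y)/N`,
`H_N f_N(x,y) = Σ_γ r(x,y,γ)(e^{N(f(x+γ_x/N)-f(x)) + h(x+γ_x/N, y+γ_y) - h(x,y)} - 1)`
converges, as `N → ∞`, to `Σ_γ r(x,y,γ)(e^{⟨∇f(x),γ_x⟩ + h(x,y+γ_y) - h(x,y)} - 1)`. -/
theorem stmt_19 {l : ℕ} {ι F : Type*} [Fintype ι] [Finite F]
    (γx : ι → EuclideanSpace ℝ (Fin l)) (σ : ι → F → F)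
    (r : EuclideanSpace ℝ (Fin l) → F → ι → ℝ)
    (hr : ∀ y γ, Continuous (fun x => r x y γ))
    (f : EuclideanSpace ℝ (Fin l) → ℝ) (hf : ContDiff ℝ 1 f)
    (hfb : ∃ C : ℝ, ∀ x, ‖fderiv ℝ f x‖ ≤ C)
    (h : EuclideanSpace ℝ (Fin l) → F → ℝ)
    (hh : ∀ y, Continuous (fun x => h x y))
    (x : EuclideanSpace ℝ (Fin l)) (y : F) :
    Tendsto
      (fun N : ℕ => ∑ γ, r x y γ *
        (Real.exp ((N : ℝ) * (f (x + ((N : ℝ)⁻¹) • γx γ) - f x)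
            + h (x + ((N : ℝ)⁻¹) • γx γ) (σ γ y) - h x y) - 1))
      atTop
      (𝓝 (∑ γ, r x y γ *
        (Real.exp ((inner ℝ (gradient f x) (γx γ) : ℝ) + h x (σ γ y) - h x y) - 1))) := by
  apply tendsto_finset_sum
  intro γ _
  apply Tendsto.const_mul
  apply Tendsto.sub_const
  -- convergence of x + N⁻¹ • v to x
  have hx : Tendsto (fun N : ℕ => x + ((N : ℝ)⁻¹) • γx γ) atTop (𝓝 x) := by
    have : Tendsto (fun N : ℕ => ((N : ℝ)⁻¹)) atTop (𝓝 0) :=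
      tendsto_inv_atTop_zero.comp tendsto_natCast_atTop_atTop
    have := (this.smul_const (γx γ)).const_add x
    simpa using this
  -- derivative term
  have hderiv : Tendsto (fun N : ℕ => (N : ℝ) * (f (x + ((N : ℝ)⁻¹) • γx γ) - f x))
      atTop (𝓝 ((inner ℝ (gradient f x) (γx γ) : ℝ))) := by
    have hdf : DifferentiableAt ℝ f x := (hf.differentiable one_ne_zero).differentiableAt
    have hg : HasDerivAt (fun t : ℝ => f (x + t • γx γ)) (fderiv ℝ f x (γx γ)) 0 := by
      have h1 : HasDerivAt (fun t : ℝ => x + t • γx γ) (γx γ) 0 := by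
        simpa using ((hasDerivAt_id (0:ℝ)).smul_const (γx γ)).const_add x
      have h2 : HasFDerivAt f (fderiv ℝ f x) (x + (0:ℝ) • γx γ) := by
        simpa using hdf.hasFDerivAt
      exact h2.comp_hasDerivAt 0 h1
    have hslope := hasDerivAt_iff_tendsto_slope.mp hg
    have hinv : Tendsto (fun N : ℕ => ((N : ℝ)⁻¹)) atTop (𝓝[≠] (0:ℝ)) := by
      apply tendsto_nhdsWithin_of_tendsto_nhds_of_eventually_within
      · exact tendsto_inv_atTop_zero.comp tendsto_natCast_atTop_atTop
      · filter_upwards [eventually_gt_atTop 0] with N hN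
        simp only [Set.mem_compl_iff, Set.mem_singleton_iff]
        positivity
    have hcomp := hslope.comp hinv
    have heq : ∀ᶠ N : ℕ in atTop,
        slope (fun t : ℝ => f (x + t • γx γ)) 0 ((N : ℝ)⁻¹)
          = (N : ℝ) * (f (x + ((N : ℝ)⁻¹) • γx γ) - f x) := by
      filter_upwards [eventually_gt_atTop 0] with N hN
      have hN' : (N : ℝ) ≠ 0 := by positivity
      simp only [slope_def_field, sub_zero, zero_smul, add_zero, div_eq_inv_mul, inv_inv]
    have := hcomp.congr' heq
    have hgrad : (inner ℝ (gradient f x) (γx γ) : ℝ) = fderiv ℝ f x (γx γ) := by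
      rw [gradient, InnerProductSpace.toDual_symm_apply]
    rw [hgrad]
    simpa using this
  have hhterm : Tendsto (fun N : ℕ => h (x + ((N : ℝ)⁻¹) • γx γ) (σ γ y)) atTop
      (𝓝 (h x (σ γ y))) := ((hh (σ γ y)).tendsto x).comp hx
  exact (Real.continuous_exp.tendsto _).comp ((hderiv.add hhterm).sub_const (h x y))
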